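/- Let A be an n×n real matrix with nonnegative entries. If x = (x_1,...,x_n) is a vector with all entries strictly positive and Ax = λx for some scalar λ, then λ equals the spectral radius of A. -/

import Mathlib

open Matrix Module.End

lemma mem_spectrum_matrix_iff {n : ℕ} (M : Matrix (Fin n) (Fin n) ℂ) (μ : ℂ) :
    μ ∈ spectrum ℂ M ↔ ∃ v ≠ 0, M.mulVec v = μ • v := by
  rw [← AlgEquiv.spectrum_eq (Matrix.toLinAlgEquiv'),
    ← hasEigenvalue_iff_mem_spectrum, hasEigenvalue_iff, Submodule.ne_bot_iff]
  constructor
  · rintro ⟨v, hv, hv0⟩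
    rw [mem_eigenspace_iff] at hv
    exact ⟨v, hv0, by simpa [Matrix.toLinAlgEquiv'_apply] using hv⟩
  · rintro ⟨v, hv0, hv⟩
    exact ⟨v, mem_eigenspace_iff.mpr (by simpa [Matrix.toLinAlgEquiv'_apply] using hv), hv0⟩

/-- A positive eigenvector of a nonnegative matrix has eigenvalue equal to the
spectral radius (the maximum of the complex moduli of the eigenvalues). -/
theorem positive_eigenvector_spectral_radius {n : ℕ} (hn : 0 < n)
    (A : Matrix (Fin n) (Fin n) ℝ) (hA : ∀ i j, 0 ≤ A i j)
    (x : Fin n → ℝ) (hx : ∀ i, 0 < x i) (lam : ℝ) (hEig : A.mulVec x = lam • x) :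
    IsGreatest {r : ℝ | ∃ μ ∈ spectrum ℂ (A.map (Complex.ofReal ·)), r = ‖μ‖}
      lam := by
  have i0 : Fin n := ⟨0, hn⟩
  -- lam ≥ 0
  have hAx : ∀ i, (A.mulVec x) i = lam * x i := by
    intro i; rw [hEig]; simp
  have hlam0 : 0 ≤ lam := by
    have h1 : 0 ≤ lam * x i0 := by
      rw [← hAx i0]
      simp only [Matrix.mulVec, dotProduct]
      exact Finset.sum_nonneg fun j _ => mul_nonneg (hA i0 j) (hx j).le
    exact (mul_nonneg_iff_of_pos_right (hx i0)).mp h1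
  constructor
  · -- membership
    refine ⟨(lam : ℂ), ?_, by simp [abs_of_nonneg hlam0]⟩
    rw [mem_spectrum_matrix_iff]
    refine ⟨fun i => (x i : ℂ), ?_, ?_⟩
    · intro h
      have := congrFun h i0
      simp only [Pi.zero_apply, Complex.ofReal_eq_zero] at this
      exact (hx i0).ne' this
    · funext i
      have := hAx i
      simp only [Matrix.mulVec, dotProduct] at this ⊢
      simp only [Matrix.map_apply, Pi.smul_apply, smul_eq_mul]
      push_cast
      rw [← Complex.ofReal_mul, ← this]
      push_cast
      ring_nf
  · -- upper bound
    rintro r ⟨μ, hμ, rfl⟩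
    rw [mem_spectrum_matrix_iff] at hμ
    obtain ⟨v, hv0, hv⟩ := hμ
    set z : Fin n → ℝ := fun i => ‖v i‖ with hz
    have hkey : ∀ i, ‖μ‖ * z i ≤ ∑ j, A i j * z j := by
      intro i
      have h1 : ‖μ‖ * z i = ‖(A.map (Complex.ofReal ·)).mulVec v i‖ := by
        rw [hv]; simp [hz, _root_.map_mul]
      rw [h1]
      simp only [Matrix.mulVec, dotProduct, Matrix.map_apply]
      calc ‖∑ j, (A i j : ℂ) * v j‖ ≤ ∑ j, ‖(A i j : ℂ) * v j‖ :=
            norm_sum_le _ _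
        _ = ∑ j, A i j * z j := by
            refine Finset.sum_congr rfl fun j _ => ?_
            rw [norm_mul, Complex.norm_real, Real.norm_eq_abs, abs_of_nonneg (hA i j)]
    -- max of ratios
    obtain ⟨i1, hi1⟩ : ∃ i, v i ≠ 0 := Function.ne_iff.mp hv0
    obtain ⟨im, -, him⟩ := Finset.exists_max_image Finset.univ (fun i => z i / x i)
      ⟨i0, Finset.mem_univ i0⟩
    set t : ℝ := z im / x im with ht
    have hzt : ∀ j, z j ≤ t * x j := by
      intro j
      have := him j (Finset.mem_univ j)
      calc z j = z j / x j * x j := (div_mul_cancel₀ (z j) (hx j).ne').symm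
        _ ≤ t * x j := mul_le_mul_of_nonneg_right this (hx j).le
    have htpos : 0 < t := by
      have hz1 : 0 < z i1 := by
        simp only [hz]
        exact norm_pos_iff.mpr hi1
      have := him i1 (Finset.mem_univ i1)
      exact lt_of_lt_of_le (div_pos hz1 (hx i1)) this
    have hzim : z im = t * x im := (div_mul_cancel₀ (z im) (hx im).ne').symm
    have hmain : ‖μ‖ * (t * x im) ≤ lam * (t * x im) := by
      calc ‖μ‖ * (t * x im) = ‖μ‖ * z im := by rw [hzim]
        _ ≤ ∑ j, A im j * z j := hkey im
        _ ≤ ∑ j, A im j * (t * x j) :=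
            Finset.sum_le_sum fun j _ => mul_le_mul_of_nonneg_left (hzt j) (hA im j)
        _ = t * ∑ j, A im j * x j := by rw [Finset.mul_sum]; exact Finset.sum_congr rfl fun j _ => by ring
        _ = t * (lam * x im) := by rw [← hAx im]; rfl
        _ = lam * (t * x im) := by ring
    exact le_of_mul_le_mul_right hmain (mul_pos htpos (hx im))
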